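/- In the hard-thresholding setting with n i.i.d. N(θ,1) observations, if η_n ≤ a_n + b_n and a_n ≥ b_n, then inf_{θ∈ℝ} P_{n,θ}(θ ∈ [θ̂_n - a_n, θ̂_n + b_n]) = Φ(n^{1/2} a_n) - Φ(n^{1/2}(η_n - b_n)). -/

import Mathlib

open MeasureTheory ProbabilityTheory Filter

/-- Joint law of `n` i.i.d. `N(θ,1)` observations. -/
noncomputable def Pnθ (n : ℕ) (θ : ℝ) : Measure (Fin n → ℝ) :=
  Measure.pi fun _ => gaussianReal θ 1

/-- Sample mean. -/
noncomputable def ybar (n : ℕ) (ω : Fin n → ℝ) : ℝ := (∑ i, ω i) / n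

/-- Hard-thresholding estimator `θ̂ = ȳ·1(|ȳ| > η)`. -/
noncomputable def hatθ (n : ℕ) (η : ℝ) (ω : Fin n → ℝ) : ℝ :=
  if η < |ybar n ω| then ybar n ω else 0

/-- Standard normal cumulative distribution function. -/
noncomputable def Phi (x : ℝ) : ℝ := (gaussianReal 0 1 (Set.Iic x)).toReal

section Aux

open MeasureTheory ProbabilityTheory Real Set
open scoped NNReal ENNReal Classical

namespace MyProof

lemma pdf_conv (m₁ m₂ : ℝ) (v₁ v₂ : ℝ≥0) (h₁ : v₁ ≠ 0) (h₂ : v₂ ≠ 0) (z x : ℝ) :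
    gaussianPDFReal m₁ v₁ x * gaussianPDFReal (x + m₂) v₂ z =
      gaussianPDFReal (m₁ + m₂) (v₁ + v₂) z *
        gaussianPDFReal (m₁ + (v₁ : ℝ) * (z - m₁ - m₂) / ((v₁ : ℝ) + (v₂ : ℝ)))
          (v₁ * v₂ / (v₁ + v₂)) x := by
  have hV1 : (0:ℝ) < v₁ := lt_of_le_of_ne (v₁.coe_nonneg) (by exact_mod_cast (Ne.symm h₁))
  have hV2 : (0:ℝ) < v₂ := lt_of_le_of_ne (v₂.coe_nonneg) (by exact_mod_cast (Ne.symm h₂))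
  have hV : (0:ℝ) < (v₁:ℝ) + v₂ := by linarith
  have hcast1 : ((v₁ + v₂ : ℝ≥0) : ℝ) = (v₁:ℝ) + v₂ := by push_cast; ring
  have hcast2 : ((v₁ * v₂ / (v₁ + v₂) : ℝ≥0) : ℝ) = (v₁:ℝ) * v₂ / ((v₁:ℝ) + v₂) := by
    push_cast; ring
  simp only [gaussianPDFReal, hcast1, hcast2]
  rw [mul_mul_mul_comm, mul_mul_mul_comm ((√(2 * π * ((v₁:ℝ) + v₂)))⁻¹), ← Real.exp_add,
    ← Real.exp_add]
  have hπ : (0:ℝ) < π := Real.pi_pos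
  congr 1
  · rw [← mul_inv, ← mul_inv, ← Real.sqrt_mul (by positivity), ← Real.sqrt_mul (by positivity)]
    congr 1
    field_simp
  · congr 1
    field_simp
    ring

lemma gaussian_conv (m₁ m₂ : ℝ) (v₁ v₂ : ℝ≥0) (h₁ : v₁ ≠ 0) :
    Measure.map (fun p : ℝ × ℝ => p.1 + p.2)
        ((gaussianReal m₁ v₁).prod (gaussianReal m₂ v₂)) =
      gaussianReal (m₁ + m₂) (v₁ + v₂) := by
  by_cases h₂ : v₂ = 0
  · subst h₂
    rw [gaussianReal_zero_var, Measure.prod_dirac, Measure.map_map measurable_add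
      (show Measurable fun x : ℝ => (x, m₂) from measurable_id.prodMk measurable_const)]
    have : ((fun p : ℝ × ℝ => p.1 + p.2) ∘ fun x : ℝ => (x, m₂)) = (· + m₂) := rfl
    rw [this, gaussianReal_map_add_const, add_zero]
  · -- main case
    have hV1 : (0:ℝ) < v₁ := lt_of_le_of_ne (v₁.coe_nonneg) (by exact_mod_cast (Ne.symm h₁))
    have hV2 : (0:ℝ) < v₂ := lt_of_le_of_ne (v₂.coe_nonneg) (by exact_mod_cast (Ne.symm h₂))
    have h₁₂ : v₁ + v₂ ≠ 0 := by
      intro h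
      have : ((v₁ + v₂ : ℝ≥0) : ℝ) = 0 := by rw [h]; simp
      push_cast at this; linarith
    ext s hs
    rw [Measure.map_apply measurable_add hs,
      Measure.prod_apply (measurable_add hs)]
    have hset : ∀ x : ℝ, (Prod.mk x ⁻¹' ((fun p : ℝ × ℝ => p.1 + p.2) ⁻¹' s))
        = (fun y => x + y) ⁻¹' s := fun x => rfl
    simp_rw [hset]
    have hstep : ∀ x : ℝ, gaussianReal m₂ v₂ ((fun y => x + y) ⁻¹' s)
        = ∫⁻ z in s, gaussianPDF (m₂ + x) v₂ z := by
      intro x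
      rw [← Measure.map_apply (measurable_const_add x) hs, gaussianReal_map_const_add,
        gaussianReal_apply _ h₂]
    simp_rw [hstep]
    rw [gaussianReal_of_var_ne_zero _ h₁,
      lintegral_withDensity_eq_lintegral_mul _ (measurable_gaussianPDF _ _)]
    rotate_left
    · apply Measurable.lintegral_prod_right (f := fun x z => gaussianPDF (m₂ + x) v₂ z)
      apply ENNReal.measurable_ofReal.comp
      have : Continuous fun p : ℝ × ℝ => gaussianPDFReal (m₂ + p.1) v₂ p.2 := by
        unfold gaussianPDFReal
        fun_prop
      exact this.measurable
    · -- main computation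
      rw [gaussianReal_apply _ h₁₂ s]
      have hv' : (v₁ * v₂ / (v₁ + v₂) : ℝ≥0) ≠ 0 := div_ne_zero (mul_ne_zero h₁ h₂) h₁₂
      have key : ∀ z : ℝ, ∫⁻ x, gaussianPDF m₁ v₁ x * gaussianPDF (m₂ + x) v₂ z ∂volume
          = gaussianPDF (m₁ + m₂) (v₁ + v₂) z := by
        intro z
        simp only [gaussianPDF]
        have : ∀ x : ℝ, ENNReal.ofReal (gaussianPDFReal m₁ v₁ x) *
            ENNReal.ofReal (gaussianPDFReal (m₂ + x) v₂ z)
            = ENNReal.ofReal (gaussianPDFReal (m₁ + m₂) (v₁ + v₂) z) *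
              ENNReal.ofReal (gaussianPDFReal
                (m₁ + (v₁ : ℝ) * (z - m₁ - m₂) / ((v₁ : ℝ) + (v₂ : ℝ)))
                (v₁ * v₂ / (v₁ + v₂)) x) := by
          intro x
          rw [← ENNReal.ofReal_mul (gaussianPDFReal_nonneg _ _ _),
            ← ENNReal.ofReal_mul (gaussianPDFReal_nonneg _ _ _), add_comm m₂ x,
            pdf_conv m₁ m₂ v₁ v₂ h₁ h₂ z x]
        simp_rw [this]
        rw [lintegral_const_mul _ ((measurable_gaussianPDFReal _ _).ennreal_ofReal)]
        have h1 : ∫⁻ x, ENNReal.ofReal (gaussianPDFReal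
            (m₁ + (v₁ : ℝ) * (z - m₁ - m₂) / ((v₁ : ℝ) + (v₂ : ℝ)))
            (v₁ * v₂ / (v₁ + v₂)) x) ∂volume = 1 :=
          lintegral_gaussianPDF_eq_one _ hv'
        rw [h1, mul_one]
      calc ∫⁻ x, gaussianPDF m₁ v₁ x * ∫⁻ z in s, gaussianPDF (m₂ + x) v₂ z ∂volume
          = ∫⁻ x, ∫⁻ z in s, gaussianPDF m₁ v₁ x * gaussianPDF (m₂ + x) v₂ z ∂volume := by
            congr 1 with x
            rw [lintegral_const_mul _ (measurable_gaussianPDF _ _)]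
        _ = ∫⁻ z in s, ∫⁻ x, gaussianPDF m₁ v₁ x * gaussianPDF (m₂ + x) v₂ z ∂volume := by
            apply lintegral_lintegral_swap
            apply AEMeasurable.mul (f := fun p : ℝ × ℝ => gaussianPDF m₁ v₁ p.1) (g := fun p : ℝ × ℝ => gaussianPDF (m₂ + p.1) v₂ p.2)
            · exact ((measurable_gaussianPDF _ _).comp measurable_fst).aemeasurable
            · apply Measurable.aemeasurable
              apply ENNReal.measurable_ofReal.comp
              have : Continuous fun p : ℝ × ℝ => gaussianPDFReal (m₂ + p.1) v₂ p.2 := by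
                unfold gaussianPDFReal
                fun_prop
              exact this.measurable
        _ = ∫⁻ z in s, gaussianPDF (m₁ + m₂) (v₁ + v₂) z := by
            simp_rw [key]


lemma sum_iid_gaussian (θ : ℝ) (n : ℕ) :
    Measure.map (fun ω : Fin n → ℝ => ∑ i, ω i)
        (Measure.pi fun _ : Fin n => gaussianReal θ 1)
      = gaussianReal (n * θ) (n : ℝ≥0) := by
  induction n with
  | zero =>
      have : (fun ω : Fin 0 → ℝ => ∑ i, ω i) = fun _ => (0:ℝ) := by
        funext ω; simp
      rw [this, Measure.map_const]
      simp [gaussianReal_zero_var]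
  | succ n ih =>
      have hmp := measurePreserving_piFinSuccAbove
        (fun _ : Fin (n + 1) => gaussianReal θ 1) 0
      set e := MeasurableEquiv.piFinSuccAbove (fun _ : Fin (n + 1) => ℝ) 0 with he
      have hsum : (fun ω : Fin (n + 1) → ℝ => ∑ i, ω i)
          = (fun q : ℝ × (Fin n → ℝ) => q.1 + ∑ j, q.2 j) ∘ e := by
        funext ω
        simp only [Function.comp_apply]
        rw [Fin.sum_univ_succAbove (fun i => ω i) 0]
        rfl
      have hmeas_sum : Measurable fun y : Fin n → ℝ => ∑ j, y j :=
        Finset.univ.measurable_sum fun i _ => measurable_pi_apply i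
      rw [hsum, ← Measure.map_map (by fun_prop) e.measurable, hmp.map_eq]
      have hprodmap : (fun q : ℝ × (Fin n → ℝ) => q.1 + ∑ j, q.2 j)
          = (fun p : ℝ × ℝ => p.1 + p.2) ∘ (Prod.map id fun y : Fin n → ℝ => ∑ j, y j) := rfl
      rw [hprodmap, ← Measure.map_map measurable_add (measurable_id.prodMap hmeas_sum),
        ← Measure.map_prod_map _ _ measurable_id hmeas_sum, Measure.map_id, ih,
        gaussian_conv _ _ _ _ one_ne_zero]
      congr 1
      · push_cast; ring
      · push_cast [Nat.cast_add]; ring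

noncomputable def stdφ : ℝ → ℝ := gaussianPDFReal 0 1

lemma continuous_stdφ : Continuous stdφ := by
  unfold stdφ gaussianPDFReal
  fun_prop

lemma stdφ_nonneg (x : ℝ) : 0 ≤ stdφ x := gaussianPDFReal_nonneg _ _ _

lemma nu_singleton (x : ℝ) : gaussianReal 0 1 {x} = 0 :=
  gaussianReal_absolutelyContinuous 0 one_ne_zero (volume_singleton)

lemma nu_Ioo_eq_Icc (u v : ℝ) : gaussianReal 0 1 (Ioo u v) = gaussianReal 0 1 (Icc u v) := by
  refine le_antisymm (measure_mono Ioo_subset_Icc_self) ?_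
  calc gaussianReal 0 1 (Icc u v) ≤ gaussianReal 0 1 ({u} ∪ Ioo u v ∪ {v}) := by
        refine measure_mono ?_
        intro x hx
        rcases eq_or_lt_of_le hx.1 with h | h
        · exact Or.inl (Or.inl h.symm)
        rcases eq_or_lt_of_le hx.2 with h' | h'
        · exact Or.inr h'
        · exact Or.inl (Or.inr ⟨h, h'⟩)
    _ ≤ gaussianReal 0 1 ({u} ∪ Ioo u v) + gaussianReal 0 1 {v} := measure_union_le _ _
    _ ≤ gaussianReal 0 1 {u} + gaussianReal 0 1 (Ioo u v) + gaussianReal 0 1 {v} := by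
        gcongr
        exact measure_union_le _ _
    _ = gaussianReal 0 1 (Ioo u v) := by rw [nu_singleton, nu_singleton, zero_add, add_zero]

lemma nu_Ioc_eq_Icc (u v : ℝ) : gaussianReal 0 1 (Ioc u v) = gaussianReal 0 1 (Icc u v) :=
  le_antisymm (measure_mono Ioc_subset_Icc_self)
    (by rw [← nu_Ioo_eq_Icc]; exact measure_mono Ioo_subset_Ioc_self)

lemma nu_Ico_eq_Icc (u v : ℝ) : gaussianReal 0 1 (Ico u v) = gaussianReal 0 1 (Icc u v) :=
  le_antisymm (measure_mono Ico_subset_Icc_self)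
    (by rw [← nu_Ioo_eq_Icc]; exact measure_mono Ioo_subset_Ico_self)

lemma phi_Ioc (u v : ℝ) (h : u ≤ v) :
    (gaussianReal 0 1 (Ioc u v)).toReal = Phi v - Phi u := by
  have hU : Iic u ∪ Ioc u v = Iic v := Iic_union_Ioc_eq_Iic h
  have hdisj : Disjoint (Iic u) (Ioc u v) := Iic_disjoint_Ioc le_rfl
  have := measure_union hdisj measurableSet_Ioc (μ := gaussianReal 0 1)
  rw [hU] at this
  have h1 : (gaussianReal 0 1 (Iic v)).toReal
      = (gaussianReal 0 1 (Iic u)).toReal + (gaussianReal 0 1 (Ioc u v)).toReal := by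
    rw [this, ENNReal.toReal_add (measure_ne_top _ _) (measure_ne_top _ _)]
  unfold Phi
  linarith [h1]

lemma phi_Icc (u v : ℝ) (h : u ≤ v) :
    (gaussianReal 0 1 (Icc u v)).toReal = Phi v - Phi u := by
  rw [← nu_Ioc_eq_Icc]; exact phi_Ioc u v h

lemma phi_Ico (u v : ℝ) (h : u ≤ v) :
    (gaussianReal 0 1 (Ico u v)).toReal = Phi v - Phi u := by
  rw [nu_Ico_eq_Icc]; rw [← nu_Ioc_eq_Icc]; exact phi_Ioc u v h

lemma phi_Ioo (u v : ℝ) (h : u ≤ v) :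
    (gaussianReal 0 1 (Ioo u v)).toReal = Phi v - Phi u := by
  rw [nu_Ioo_eq_Icc]; rw [← nu_Ioc_eq_Icc]; exact phi_Ioc u v h

lemma Phi_mono : Monotone Phi := by
  intro x y hxy
  unfold Phi
  exact ENNReal.toReal_mono (measure_ne_top _ _) (measure_mono (Iic_subset_Iic.2 hxy))

lemma Phi_neg (x : ℝ) : Phi (-x) = 1 - Phi x := by
  have hmap : (gaussianReal 0 1).map (fun y => (-1 : ℝ) * y) = gaussianReal 0 1 := by
    rw [gaussianReal_map_const_mul]
    congr 1
    · norm_num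
    · ext
      norm_num
  have h1 : gaussianReal 0 1 (Iic (-x)) = gaussianReal 0 1 (Ici x) := by
    conv_lhs => rw [← hmap]
    rw [Measure.map_apply (by fun_prop) measurableSet_Iic]
    congr 1
    ext y
    simp only [mem_preimage, mem_Iic, mem_Ici]
    constructor <;> intro h <;> linarith
  have h2 : gaussianReal 0 1 (Ici x) = gaussianReal 0 1 (Ioi x) := by
    refine le_antisymm ?_ (measure_mono Ioi_subset_Ici_self)
    calc gaussianReal 0 1 (Ici x) ≤ gaussianReal 0 1 ({x} ∪ Ioi x) := by
          refine measure_mono ?_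
          intro y hy
          rcases eq_or_lt_of_le (mem_Ici.1 hy) with h | h
          · exact Or.inl h.symm
          · exact Or.inr h
      _ ≤ gaussianReal 0 1 {x} + gaussianReal 0 1 (Ioi x) := measure_union_le _ _
      _ = gaussianReal 0 1 (Ioi x) := by rw [nu_singleton, zero_add]
  have h3 : gaussianReal 0 1 (Iic x) + gaussianReal 0 1 (Ioi x) = 1 := by
    rw [← measure_union (Iic_disjoint_Ioi le_rfl) measurableSet_Ioi, Iic_union_Ioi,
      measure_univ]
  have h4 : (gaussianReal 0 1 (Iic x)).toReal + (gaussianReal 0 1 (Ioi x)).toReal = 1 := by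
    rw [← ENNReal.toReal_add (measure_ne_top _ _) (measure_ne_top _ _), h3]
    rfl
  unfold Phi
  rw [h1, h2]
  linarith

lemma Phi_eq_integral (x : ℝ) : Phi x = ∫ t in Iic x, stdφ t := by
  unfold Phi stdφ
  rw [gaussianReal_apply_eq_integral _ one_ne_zero]
  rw [ENNReal.toReal_ofReal]
  exact setIntegral_nonneg measurableSet_Iic fun t _ => gaussianPDFReal_nonneg _ _ _

lemma hasDerivAt_Phi (x : ℝ) : HasDerivAt Phi (stdφ x) x := by
  have hint : ∀ y : ℝ, IntegrableOn stdφ (Iic y) volume :=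
    fun y => (integrable_gaussianPDFReal 0 1).integrableOn
  have heq : Phi = fun u => Phi 0 + ∫ t in (0:ℝ)..u, stdφ t := by
    funext u
    rw [Phi_eq_integral, Phi_eq_integral, ← intervalIntegral.integral_Iic_sub_Iic (hint 0) (hint u)]
    ring
  rw [heq]
  apply HasDerivAt.const_add
  apply intervalIntegral.integral_hasDerivAt_right
  · exact (integrable_gaussianPDFReal 0 1).intervalIntegrable
  · exact continuous_stdφ.stronglyMeasurable.stronglyMeasurableAtFilter
  · exact continuous_stdφ.continuousAt

lemma continuous_Phi : Continuous Phi :=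
  Differentiable.continuous (fun x => (hasDerivAt_Phi x).differentiableAt)

lemma stdφ_le (s t : ℝ) (h : t ^ 2 ≤ s ^ 2) : stdφ s ≤ stdφ t := by
  unfold stdφ gaussianPDFReal
  have h1 : -(s - 0) ^ 2 / (2 * ((1:ℝ≥0):ℝ)) ≤ -(t - 0) ^ 2 / (2 * ((1:ℝ≥0):ℝ)) := by
    push_cast
    nlinarith
  exact mul_le_mul_of_nonneg_left (Real.exp_le_exp.2 h1) (by positivity)

lemma D_antitone (H : ℝ) (hH : 0 < H) :
    AntitoneOn (fun s => Phi (s + H) - Phi s) (Ici (-H / 2)) := by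
  have hD : ∀ s : ℝ, HasDerivAt (fun s => Phi (s + H) - Phi s) (stdφ (s + H) - stdφ s) s := by
    intro s
    have h1 : HasDerivAt (fun s : ℝ => Phi (s + H)) (stdφ (s + H)) s := by
      have := (hasDerivAt_Phi (s + H)).comp s ((hasDerivAt_id s).add_const H)
      exact HasDerivAt.comp_add_const s H (hasDerivAt_Phi (s + H))
    exact h1.sub (hasDerivAt_Phi s)
  apply antitoneOn_of_deriv_nonpos (convex_Ici _)
  · exact (Continuous.sub (continuous_Phi.comp (by fun_prop)) continuous_Phi).continuousOn
  · intro x _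
    exact ((hD x).differentiableAt).differentiableWithinAt
  · intro x hx
    rw [interior_Ici] at hx
    rw [(hD x).deriv]
    have : stdφ (x + H) ≤ stdφ x := by
      apply stdφ_le
      have : -H / 2 < x := hx
      nlinarith
    linarith

lemma D_symm (H s : ℝ) : Phi (-H - s + H) - Phi (-H - s) = Phi (s + H) - Phi s := by
  have e1 : -H - s + H = -s := by ring
  have e2 : -H - s = -(s + H) := by ring
  rw [e1, e2, Phi_neg, Phi_neg]
  ring

lemma D_le (H : ℝ) (hH : 0 < H) (B U : ℝ) (hBU : -B ≤ U) (hU2 : B - H ≤ U) :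
    Phi (U + H) - Phi U ≤ Phi (-B + H) - Phi (-B) := by
  rcases le_total B (H / 2) with hB | hB
  · simpa using D_antitone H hH (a := -B) (b := U) (by simp; linarith) (by simp; linarith) hBU
  · have := D_antitone H hH (a := B - H) (b := U) (by simp; linarith) (by simp; linarith) hU2
    calc Phi (U + H) - Phi U ≤ Phi (B - H + H) - Phi (B - H) := by simpa using this
      _ = Phi (-H - (B - H) + H) - Phi (-H - (B - H)) := (D_symm H (B - H)).symm
      _ = Phi (-B + H) - Phi (-B) := by rw [show -H - (B - H) = -B by ring]


lemma ybar_law (θ : ℝ) (n : ℕ) (hn : 1 ≤ n) :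
    Measure.map (ybar n) (Pnθ n θ) = gaussianReal θ ((n : ℝ≥0))⁻¹ := by
  have hn0 : (0:ℝ) < n := by exact_mod_cast hn
  have hmeas_sum : Measurable fun ω : Fin n → ℝ => ∑ i, ω i :=
    Finset.univ.measurable_sum fun i _ => measurable_pi_apply i
  have hyb : ybar n = (fun s : ℝ => ((n:ℝ))⁻¹ * s) ∘ (fun ω : Fin n → ℝ => ∑ i, ω i) := by
    funext ω
    simp [ybar, div_eq_inv_mul]
  rw [hyb, Pnθ, ← Measure.map_map (measurable_const_mul _) hmeas_sum, sum_iid_gaussian,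
    gaussianReal_map_const_mul]
  congr 1
  · field_simp
  · ext
    push_cast
    field_simp

lemma map_std (θ : ℝ) (n : ℕ) (hn : 1 ≤ n) :
    Measure.map (fun x : ℝ => Real.sqrt n * (x - θ)) (gaussianReal θ ((n : ℝ≥0))⁻¹)
      = gaussianReal 0 1 := by
  have hn0 : (0:ℝ) < n := by exact_mod_cast hn
  have hc : (0:ℝ) < Real.sqrt n := Real.sqrt_pos.2 hn0
  have hdecomp : (fun x : ℝ => Real.sqrt n * (x - θ))
      = (fun y : ℝ => y + (-(Real.sqrt n * θ))) ∘ (fun x : ℝ => Real.sqrt n * x) := by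
    funext x
    simp [Function.comp]
    ring
  rw [hdecomp, ← Measure.map_map (measurable_add_const _) (measurable_const_mul _),
    gaussianReal_map_const_mul, gaussianReal_map_add_const]
  congr 1
  · ring
  · ext
    push_cast
    rw [Real.sq_sqrt hn0.le]
    field_simp

lemma event_eq (n : ℕ) (η a b θ : ℝ) (hn : 1 ≤ n) :
    {ω : Fin n → ℝ | hatθ n η ω - a ≤ θ ∧ θ ≤ hatθ n η ω + b}
      = (fun ω => Real.sqrt n * (ybar n ω - θ)) ⁻¹'
        ((Icc (-(Real.sqrt n * b)) (Real.sqrt n * a) \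
            Icc (-(Real.sqrt n * η) - Real.sqrt n * θ) (Real.sqrt n * η - Real.sqrt n * θ)) ∪
          (if -a ≤ θ ∧ θ ≤ b then
            Icc (-(Real.sqrt n * η) - Real.sqrt n * θ) (Real.sqrt n * η - Real.sqrt n * θ)
          else ∅)) := by
  have hn0 : (0:ℝ) < n := by exact_mod_cast hn
  have hc : (0:ℝ) < Real.sqrt n := Real.sqrt_pos.2 hn0
  ext ω
  set y := ybar n ω with hy
  have hmul : ∀ u v : ℝ, u ≤ v ↔ Real.sqrt n * u ≤ Real.sqrt n * v :=
    fun u v => (mul_le_mul_iff_right₀ hc).symm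
  have hIcc2 : Real.sqrt n * (y - θ) ∈
      Icc (-(Real.sqrt n * η) - Real.sqrt n * θ) (Real.sqrt n * η - Real.sqrt n * θ)
      ↔ ¬ (η < |y|) := by
    rw [not_lt, abs_le, mem_Icc]
    constructor
    · rintro ⟨h1, h2⟩
      constructor
      · rw [hmul (-η) y]; nlinarith
      · rw [hmul y η]; nlinarith
    · rintro ⟨h1, h2⟩
      rw [hmul (-η) y] at h1
      rw [hmul y η] at h2
      constructor <;> nlinarith
  have hIcc1 : Real.sqrt n * (y - θ) ∈ Icc (-(Real.sqrt n * b)) (Real.sqrt n * a)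
      ↔ (θ - b ≤ y ∧ y ≤ θ + a) := by
    rw [mem_Icc]
    constructor
    · rintro ⟨h1, h2⟩
      constructor
      · rw [hmul (θ - b) y]; nlinarith
      · rw [hmul y (θ + a)]; nlinarith
    · rintro ⟨h1, h2⟩
      rw [hmul (θ - b) y] at h1
      rw [hmul y (θ + a)] at h2
      constructor <;> nlinarith
  simp only [mem_setOf_eq, mem_preimage, mem_union, mem_diff, hIcc1, hIcc2, hatθ, ← hy]
  by_cases hcase : η < |y|
  · rw [if_pos hcase]
    constructor
    · rintro ⟨h1, h2⟩
      exact Or.inl ⟨⟨by linarith, by linarith⟩, by simpa using hcase⟩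
    · rintro (⟨⟨h1, h2⟩, _⟩ | hmem)
      · exact ⟨by linarith, by linarith⟩
      · split_ifs at hmem with hP
        · exact absurd (hIcc2.1 hmem) (by simpa using hcase)
        · exact absurd hmem (Set.notMem_empty _)
  · rw [if_neg hcase]
    constructor
    · rintro ⟨h1, h2⟩
      right
      rw [if_pos ⟨by linarith, by linarith⟩]
      exact hIcc2.2 hcase
    · rintro (⟨_, hnn⟩ | hmem)
      · exact absurd (not_not.1 hnn) hcase
      · split_ifs at hmem with hP
        · exact ⟨by linarith [hP.1], by linarith [hP.2]⟩
        · exact absurd hmem (Set.notMem_empty _)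


lemma toReal_mono_meas {s t : Set ℝ} (h : s ⊆ t) :
    (gaussianReal 0 1 s).toReal ≤ (gaussianReal 0 1 t).toReal :=
  ENNReal.toReal_mono (measure_ne_top _ _) (measure_mono h)

lemma core_lower (A B H t : ℝ) (hH : 0 < H) (hA : 0 ≤ A) (hB : 0 ≤ B)
    (h1 : H ≤ A + B) (h2 : B ≤ A) (P : Prop) [Decidable P] (hP : P ↔ (-A ≤ t ∧ t ≤ B)) :
    Phi A - Phi (H - B) ≤
      (gaussianReal 0 1 ((Icc (-B) A \ Icc (-H - t) (H - t)) ∪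
        (if P then Icc (-H - t) (H - t) else ∅))).toReal := by
  by_cases hp : P
  · -- middle case: the whole interval Icc (-B) A is covered
    have hsub : Icc (-B) A ⊆ (Icc (-B) A \ Icc (-H - t) (H - t)) ∪
        (if P then Icc (-H - t) (H - t) else ∅) := by
      intro z hz
      by_cases hzI : z ∈ Icc (-H - t) (H - t)
      · exact Or.inr (by rwa [if_pos hp])
      · exact Or.inl ⟨hz, hzI⟩
    calc Phi A - Phi (H - B) ≤ Phi A - Phi (-B) := by
          have := Phi_mono (show -B ≤ H - B by linarith)
          linarith
      _ = (gaussianReal 0 1 (Icc (-B) A)).toReal := (phi_Icc _ _ (by linarith)).symm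
      _ ≤ _ := toReal_mono_meas hsub
  · rw [if_neg hp, union_empty]
    have ht : t < -A ∨ B < t := by
      rcases not_and_or.1 (fun h => hp (hP.2 h)) with h | h
      · exact Or.inl (not_le.1 h)
      · exact Or.inr (not_le.1 h)
    rcases ht with ht | ht
    · -- t < -A : left escape
      set U := -H - t with hU
      have hsub : Ico (-B) (min A U) ⊆ Icc (-B) A \ Icc (-H - t) (H - t) := by
        intro z hz
        refine ⟨⟨hz.1, le_of_lt (lt_of_lt_of_le hz.2 (min_le_left _ _))⟩, ?_⟩
        intro hzI
        exact absurd hzI.1 (not_le.2 (lt_of_lt_of_le hz.2 (min_le_right _ _)))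
      have hBm : -B ≤ min A U := le_min (by linarith) (by simp only [hU]; linarith)
      have hstep : Phi A - Phi (H - B) ≤ Phi (min A U) - Phi (-B) := by
        rcases le_total A U with h | h
        · rw [min_eq_left h]
          have := Phi_mono (show -B ≤ H - B by linarith)
          linarith
        · rw [min_eq_right h]
          have hAU : Phi A ≤ Phi (U + H) := Phi_mono (by simp only [hU]; linarith)
          have hD := D_le H hH B U (by simp only [hU]; linarith) (by simp only [hU]; linarith)
          have : -B + H = H - B := by ring
          rw [this] at hD
          linarith
      calc Phi A - Phi (H - B) ≤ Phi (min A U) - Phi (-B) := hstep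
        _ = (gaussianReal 0 1 (Ico (-B) (min A U))).toReal := (phi_Ico _ _ hBm).symm
        _ ≤ _ := toReal_mono_meas hsub
    · -- B < t : right escape
      have hsub : Ioc (max (H - t) (-B)) A ⊆ Icc (-B) A \ Icc (-H - t) (H - t) := by
        intro z hz
        refine ⟨⟨le_of_lt (lt_of_le_of_lt (le_max_right _ _) hz.1), hz.2⟩, ?_⟩
        intro hzI
        exact absurd hzI.2 (not_le.2 (lt_of_le_of_lt (le_max_left _ _) hz.1))
      have hmA : max (H - t) (-B) ≤ A := max_le (by linarith) (by linarith)
      calc Phi A - Phi (H - B)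
          ≤ Phi A - Phi (max (H - t) (-B)) := by
            have := Phi_mono (show max (H - t) (-B) ≤ H - B from
              max_le (by linarith) (by linarith))
            linarith
        _ = (gaussianReal 0 1 (Ioc (max (H - t) (-B)) A)).toReal := (phi_Ioc _ _ hmA).symm
        _ ≤ _ := toReal_mono_meas hsub

lemma core_upper (A B H t : ℝ) (hH : 0 < H) (hA : 0 ≤ A) (hB : 0 ≤ B)
    (h1 : H ≤ A + B) (h2 : B ≤ A) (P : Prop) [Decidable P] (hP : P ↔ (-A ≤ t ∧ t ≤ B)) (hBt : B < t) :
    (gaussianReal 0 1 ((Icc (-B) A \ Icc (-H - t) (H - t)) ∪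
        (if P then Icc (-H - t) (H - t) else ∅))).toReal ≤ Phi A - Phi (H - t) := by
  have hp : ¬ P := fun h => absurd (hP.1 h).2 (not_le.2 hBt)
  rw [if_neg hp, union_empty]
  have hsub : Icc (-B) A \ Icc (-H - t) (H - t) ⊆ Icc (H - t) A := by
    intro z hz
    refine ⟨?_, hz.1.2⟩
    by_contra hzlt
    push_neg at hzlt
    exact hz.2 ⟨by linarith [hz.1.1], le_of_lt hzlt⟩
  calc (gaussianReal 0 1 (Icc (-B) A \ Icc (-H - t) (H - t))).toReal
      ≤ (gaussianReal 0 1 (Icc (H - t) A)).toReal := toReal_mono_meas hsub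
    _ = Phi A - Phi (H - t) := phi_Icc _ _ (by linarith)


end MyProof

/-- If `η_n ≤ a_n + b_n` and `a_n ≥ b_n`, the infimal coverage probability of
`[θ̂_n - a_n, θ̂_n + b_n]` equals `Φ(√n a_n) - Φ(√n (η_n - b_n))`. -/
theorem stmt2 (n : ℕ) (hn : 1 ≤ n) (η a b : ℝ) (hη : 0 < η) (ha : 0 ≤ a) (hb : 0 ≤ b)
    (h1 : η ≤ a + b) (h2 : b ≤ a) :
    ⨅ θ : ℝ,
      ((Pnθ n θ) {ω | hatθ n η ω - a ≤ θ ∧ θ ≤ hatθ n η ω + b}).toReal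
      = Phi (Real.sqrt n * a) - Phi (Real.sqrt n * (η - b)) := by
  classical
  have hn0 : (0:ℝ) < n := by exact_mod_cast hn
  have hc : (0:ℝ) < Real.sqrt n := Real.sqrt_pos.2 hn0
  have hmeasA : ∀ θ : ℝ, MeasurableSet
      ((Set.Icc (-(Real.sqrt n * b)) (Real.sqrt n * a) \
          Set.Icc (-(Real.sqrt n * η) - Real.sqrt n * θ) (Real.sqrt n * η - Real.sqrt n * θ)) ∪
        (if -a ≤ θ ∧ θ ≤ b then
          Set.Icc (-(Real.sqrt n * η) - Real.sqrt n * θ) (Real.sqrt n * η - Real.sqrt n * θ)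
        else ∅)) := by
    intro θ
    apply MeasurableSet.union
    · exact measurableSet_Icc.diff measurableSet_Icc
    · split_ifs
      · exact measurableSet_Icc
      · exact MeasurableSet.empty
  have hyb : Measurable (ybar n) :=
    (Finset.univ.measurable_sum fun i _ => measurable_pi_apply i).div_const _
  have hf : ∀ θ : ℝ, ((Pnθ n θ) {ω | hatθ n η ω - a ≤ θ ∧ θ ≤ hatθ n η ω + b}).toReal
      = (gaussianReal 0 1
        ((Set.Icc (-(Real.sqrt n * b)) (Real.sqrt n * a) \
            Set.Icc (-(Real.sqrt n * η) - Real.sqrt n * θ) (Real.sqrt n * η - Real.sqrt n * θ)) ∪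
          (if -a ≤ θ ∧ θ ≤ b then
            Set.Icc (-(Real.sqrt n * η) - Real.sqrt n * θ) (Real.sqrt n * η - Real.sqrt n * θ)
          else ∅))).toReal := by
    intro θ
    congr 1
    rw [MyProof.event_eq n η a b θ hn]
    have hmeas : Measurable fun ω : Fin n → ℝ => Real.sqrt n * (ybar n ω - θ) :=
      (hyb.sub_const θ).const_mul _
    rw [← Measure.map_apply hmeas (hmeasA θ)]
    have hcomp : (fun ω : Fin n → ℝ => Real.sqrt n * (ybar n ω - θ))
        = (fun x : ℝ => Real.sqrt n * (x - θ)) ∘ ybar n := rfl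
    rw [hcomp, ← Measure.map_map (by fun_prop) hyb, MyProof.ybar_law θ n hn,
      MyProof.map_std θ n hn]
  rw [iInf_congr hf, mul_sub]
  have hH : (0:ℝ) < Real.sqrt n * η := mul_pos hc hη
  have hA : (0:ℝ) ≤ Real.sqrt n * a := mul_nonneg hc.le ha
  have hB : (0:ℝ) ≤ Real.sqrt n * b := mul_nonneg hc.le hb
  have h1' : Real.sqrt n * η ≤ Real.sqrt n * a + Real.sqrt n * b := by
    rw [← mul_add]; exact mul_le_mul_of_nonneg_left h1 hc.le
  have h2' : Real.sqrt n * b ≤ Real.sqrt n * a := mul_le_mul_of_nonneg_left h2 hc.le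
  have key : ∀ u v : ℝ, Real.sqrt n * u ≤ Real.sqrt n * v ↔ u ≤ v :=
    fun u v => mul_le_mul_iff_right₀ hc
  have hPiff : ∀ θ : ℝ, (-a ≤ θ ∧ θ ≤ b) ↔
      (-(Real.sqrt n * a) ≤ Real.sqrt n * θ ∧ Real.sqrt n * θ ≤ Real.sqrt n * b) := by
    intro θ
    constructor
    · rintro ⟨u, v⟩
      exact ⟨by linarith [(key (-a) θ).2 u], (key θ b).2 v⟩
    · rintro ⟨u, v⟩
      exact ⟨(key (-a) θ).1 (by linarith), (key θ b).1 v⟩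
  apply le_antisymm
  · -- infimum ≤ limit value
    have hbdd : BddBelow (Set.range fun θ : ℝ => (gaussianReal 0 1
        ((Set.Icc (-(Real.sqrt n * b)) (Real.sqrt n * a) \
            Set.Icc (-(Real.sqrt n * η) - Real.sqrt n * θ) (Real.sqrt n * η - Real.sqrt n * θ)) ∪
          (if -a ≤ θ ∧ θ ≤ b then
            Set.Icc (-(Real.sqrt n * η) - Real.sqrt n * θ) (Real.sqrt n * η - Real.sqrt n * θ)
          else ∅))).toReal) := by
      refine ⟨0, ?_⟩
      rintro x ⟨θ, rfl⟩
      exact ENNReal.toReal_nonneg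
    have htend : Filter.Tendsto
        (fun θ : ℝ => Phi (Real.sqrt n * a) - Phi (Real.sqrt n * η - Real.sqrt n * θ))
        (nhdsWithin b (Set.Ioi b))
        (nhds (Phi (Real.sqrt n * a) - Phi (Real.sqrt n * η - Real.sqrt n * b))) := by
      have hcont : Continuous
          (fun θ : ℝ => Phi (Real.sqrt n * a) - Phi (Real.sqrt n * η - Real.sqrt n * θ)) :=
        continuous_const.sub (MyProof.continuous_Phi.comp (by fun_prop))
      exact (hcont.continuousAt.tendsto).mono_left nhdsWithin_le_nhds
    refine ge_of_tendsto htend ?_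
    filter_upwards [self_mem_nhdsWithin] with θ hθ
    have hθb : b < θ := hθ
    refine le_trans (ciInf_le hbdd θ) ?_
    have hBt : Real.sqrt n * b < Real.sqrt n * θ := (mul_lt_mul_iff_right₀ hc).2 hθb
    have := MyProof.core_upper (Real.sqrt n * a) (Real.sqrt n * b) (Real.sqrt n * η)
      (Real.sqrt n * θ) hH hA hB h1' h2' (-a ≤ θ ∧ θ ≤ b) (hPiff θ) hBt
    exact this
  · refine le_ciInf fun θ => ?_
    exact MyProof.core_lower (Real.sqrt n * a) (Real.sqrt n * b) (Real.sqrt n * η)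
      (Real.sqrt n * θ) hH hA hB h1' h2' (-a ≤ θ ∧ θ ≤ b) (hPiff θ)

end Aux
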